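/- Let K be a field, n ≥ 1, and A ∈ K^{n×n}. Then A = F_p for some p ∈ K^n if and only if the bilinear map (b, g) ↦ R(A, b) g is symmetric, i.e. [g, Ag, …, A^{n-1} g] b = [b, Ab, …, A^{n-1} b] g for all b, g ∈ K^n. -/

import Mathlib

open Matrix

/-- The second companion matrix `F_p` of `p ∈ K^{n+1}`: columns `0,…,n-1` are
`e_1,…,e_n` and the last column is `p`. -/
def companion {K : Type*} [Field K] {n : ℕ} (p : Fin (n + 1) → K) :
    Matrix (Fin (n + 1)) (Fin (n + 1)) K :=
  Matrix.of fun i j => if j = Fin.last n then p i else if (i : ℕ) = (j : ℕ) + 1 then 1 else 0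

/-- The reachability (Krylov) matrix `R(A, g) = [g, Ag, …, A^{n-1} g]`. -/
def krylov {K : Type*} [Field K] {n : ℕ} (A : Matrix (Fin n) (Fin n) K) (g : Fin n → K) :
    Matrix (Fin n) (Fin n) K :=
  Matrix.of fun i j => (A ^ (j : ℕ)).mulVec g i

/-- `b(A) = Σ_{i=0}^{n-1} b_i A^i`. -/
def polyEval {K : Type*} [Field K] {n : ℕ} (b : Fin n → K) (A : Matrix (Fin n) (Fin n) K) :
    Matrix (Fin n) (Fin n) K :=
  ∑ i : Fin n, b i • A ^ (i : ℕ)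
lemma krylov_mulVec {K : Type*} [Field K] {n : ℕ} (A : Matrix (Fin (n+1)) (Fin (n+1)) K)
    (g b : Fin (n+1) → K) :
    (krylov A g).mulVec b = (polyEval b A).mulVec g := by
  ext i
  simp only [krylov, polyEval, Matrix.mulVec, dotProduct, Matrix.of_apply,
    Matrix.sum_apply, Matrix.smul_apply, smul_eq_mul, Finset.sum_mul]
  rw [Finset.sum_comm]
  exact Finset.sum_congr rfl fun j _ => Finset.sum_congr rfl fun k _ => by ring

lemma polyEval_commute {K : Type*} [Field K] {n : ℕ} (A : Matrix (Fin (n+1)) (Fin (n+1)) K)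
    (b g : Fin (n+1) → K) :
    Commute (polyEval b A) (polyEval g A) := by
  apply Commute.sum_left
  intro i _
  apply Commute.sum_right
  intro j _
  exact (((Commute.refl A).pow_pow _ _).smul_left _).smul_right _

lemma companion_pow_single {K : Type*} [Field K] {n : ℕ} (p : Fin (n+1) → K)
    (k : Fin (n+1)) :
    ((companion p) ^ (k : ℕ)).mulVec (Pi.single 0 1) = Pi.single k 1 := by
  induction k using Fin.induction with
  | zero =>
      ext x
      simp [Matrix.one_apply, Pi.single_apply]
  | succ i ih =>
      have : ((i.succ : Fin (n+1)) : ℕ) = (i.castSucc : ℕ) + 1 := by simp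
      rw [this, pow_succ', ← Matrix.mulVec_mulVec, ih, Matrix.mulVec_single_one]
      ext x
      simp only [companion, Matrix.col_apply, Matrix.of_apply]
      have hne : (i.castSucc : Fin (n+1)) ≠ Fin.last n := (Fin.castSucc_lt_last i).ne
      rw [if_neg hne]
      by_cases h : x = i.succ
      · subst h
        simp [Fin.val_succ, Pi.single_eq_same]
      · have h2 : (x : ℕ) ≠ (i.castSucc : ℕ) + 1 := by
          intro hc
          apply h
          apply Fin.ext
          simpa using hc
        rw [if_neg h2, Pi.single_eq_of_ne h]

/-- Theorem 2: `A = F_p` for some `p` iff the bilinear map `(b,g) ↦ R(A,b)g` is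
symmetric, i.e. `[g, Ag, …, A^{n-1}g] b = [b, Ab, …, A^{n-1}b] g` for all `b, g`. -/
theorem companion_iff_krylov_symm {K : Type*} [Field K] {n : ℕ}
    (A : Matrix (Fin (n + 1)) (Fin (n + 1)) K) :
    (∃ p : Fin (n + 1) → K, A = companion p) ↔
      ∀ b g : Fin (n + 1) → K, (krylov A g).mulVec b = (krylov A b).mulVec g := by
  constructor
  · rintro ⟨p, rfl⟩ b g
    set A := companion p with hA
    have key : ∀ v : Fin (n+1) → K, (polyEval v A).mulVec (Pi.single 0 1) = v := by
      intro v
      ext i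
      simp only [polyEval, Matrix.mulVec, dotProduct, Matrix.sum_apply,
        Matrix.smul_apply, smul_eq_mul, Finset.sum_mul]
      rw [Finset.sum_comm]
      have : ∀ k : Fin (n+1),
          (∑ j, v k * (A ^ (k:ℕ)) i j * (Pi.single 0 1 : Fin (n+1) → K) j) = v k * (Pi.single k 1 : Fin (n+1) → K) i := by
        intro k
        have h := congrFun (companion_pow_single p k) i
        simp only [Matrix.mulVec, dotProduct] at h
        rw [← h, Finset.mul_sum]
        congr 1; ext j; ring
      rw [Finset.sum_congr rfl fun k _ => this k]
      rw [Finset.sum_eq_single i]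
      · simp
      · intro k _ hk; rw [Pi.single_eq_of_ne (Ne.symm hk)]; ring
      · intro h; exact absurd (Finset.mem_univ i) h
    rw [krylov_mulVec, krylov_mulVec]
    conv_lhs => rw [← key g, Matrix.mulVec_mulVec, (polyEval_commute A b g).eq,
      ← Matrix.mulVec_mulVec, key b]
  · intro hsym
    have key : ∀ k : Fin (n+1), (A ^ (k:ℕ)).mulVec (Pi.single 0 1) = Pi.single k 1 := by
      intro k
      have h := hsym (Pi.single k 1) (Pi.single 0 1)
      rw [krylov_mulVec, krylov_mulVec] at h
      have e1 : polyEval (Pi.single k (1:K)) A = A ^ (k : ℕ) := by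
        simp [polyEval, Pi.single_apply, Finset.sum_ite_eq', Finset.mem_univ]
      have e0 : polyEval (Pi.single 0 (1:K)) A = 1 := by
        have : polyEval (Pi.single (0 : Fin (n+1)) (1:K)) A = A ^ ((0 : Fin (n+1)) : ℕ) := by
          simp [polyEval, Pi.single_apply, Finset.sum_ite_eq', Finset.mem_univ]
        simpa using this
      rw [e1, e0, Matrix.one_mulVec] at h
      exact h
    refine ⟨A.mulVec (Pi.single (Fin.last n) 1), ?_⟩
    ext i j
    have hcol : A.mulVec (Pi.single j 1) = (A ^ ((j:ℕ)+1)).mulVec (Pi.single 0 1) := by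
      rw [pow_succ', ← Matrix.mulVec_mulVec, key j]
    by_cases hj : j = Fin.last n
    · subst hj
      simp [companion, Matrix.mulVec_single]
    · have hjlt : (j : ℕ) < n := Fin.val_lt_last hj
      have : A.mulVec (Pi.single j 1) = Pi.single (⟨(j:ℕ)+1, by omega⟩ : Fin (n+1)) 1 := by
        rw [hcol]
        have := key (⟨(j:ℕ)+1, by omega⟩ : Fin (n+1))
        simpa using this
      rw [Matrix.mulVec_single_one] at this
      have h := congrFun this i
      simp only [Matrix.col_apply] at h
      rw [h]
      simp only [companion, Matrix.of_apply, if_neg hj]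
      rw [Pi.single_apply]
      by_cases hi : i = (⟨(j:ℕ)+1, by omega⟩ : Fin (n+1))
      · rw [if_pos hi, if_pos (by rw [hi])]
      · rw [if_neg hi, if_neg (fun hc => hi (Fin.ext (by simpa using hc)))]
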